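/- Let G be a finite group and let N = ⟨e_1, …, e_l⟩ be an abelian minimal normal subgroup of G. If G = ⟨g_1, …, g_d⟩N then one of the following occurs: (1) d(G) ≤ d and either G = ⟨g_1, …, g_d⟩ or there exist 1 ≤ i ≤ d and 1 ≤ j ≤ l such that G = ⟨g_1, …, g_{i-1}, g_ie_j, g_{i+1}, …, g_d⟩; (2) d(G) = d + 1 and G = ⟨g_1, …, g_d, x⟩ for every x ∈ N with x ≠ 1. -/

import Mathlib

namespace AbMinAux

variable {G : Type*} [Group G]

/-- A "section-like" endomorphism relative to a normal subgroup `N`. -/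
def IsSec (N : Subgroup G) (s : G →* G) : Prop :=
  (∀ x : G, x⁻¹ * s x ∈ N) ∧ ∀ n ∈ N, s n = 1

theorem normal_inf (N K : Subgroup G) (hN : N.Normal)
    (hab : ∀ a ∈ N, ∀ b ∈ N, a * b = b * a)
    (hsup : K ⊔ N = ⊤) : (K ⊓ N).Normal := by
  rw [← Subgroup.normalizer_eq_top_iff]
  rw [eq_top_iff, ← hsup]
  apply sup_le
  · intro k hk
    rw [Subgroup.mem_normalizer_iff]
    intro h
    constructor
    · rintro ⟨h1, h2⟩
      exact ⟨K.mul_mem (K.mul_mem hk h1) (K.inv_mem hk), hN.conj_mem h h2 k⟩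
    · rintro ⟨h1, h2⟩
      have : k⁻¹ * (k * h * k⁻¹) * k ∈ K ⊓ N :=
        ⟨K.mul_mem (K.mul_mem (K.inv_mem hk) h1) hk, by simpa using hN.conj_mem _ h2 k⁻¹⟩
      simpa [mul_assoc] using this
  · intro n hn
    rw [Subgroup.mem_normalizer_iff]
    intro h
    constructor
    · rintro ⟨h1, h2⟩
      have : n * h * n⁻¹ = h := by
        rw [hab n hn h h2, mul_assoc, mul_inv_cancel, mul_one]
      rw [this]; exact ⟨h1, h2⟩
    · rintro ⟨h1, h2⟩
      have hhN : h ∈ N := by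
        have := hN.conj_mem _ h2 n⁻¹
        simpa [mul_assoc] using this
      have : n * h * n⁻¹ = h := by
        rw [hab n hn h hhN, mul_assoc, mul_inv_cancel, mul_one]
      rw [← this]; exact ⟨h1, h2⟩

theorem sec_exists (N : Subgroup G) (hN : N.Normal) (K : Subgroup G)
    (hsup : K ⊔ N = ⊤) (hinf : K ⊓ N = ⊥) :
    ∃ s : G →* G, IsSec N s ∧ ∀ k ∈ K, s k = k := by
  haveI := hN
  set π := QuotientGroup.mk' N with hπ
  set ρ := π.comp K.subtype with hρ
  have hinj : Function.Injective ρ := by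
    intro a b hab
    have h1 : ((a : G) : G ⧸ N) = ((b : G) : G ⧸ N) := hab
    have h2 : (a : G)⁻¹ * b ∈ N := QuotientGroup.eq.mp h1
    have h3 : (a : G)⁻¹ * b ∈ K ⊓ N := ⟨K.mul_mem (K.inv_mem a.2) b.2, h2⟩
    rw [hinf, Subgroup.mem_bot] at h3
    ext
    exact inv_mul_eq_one.mp h3
  have hsurj : Function.Surjective ρ := by
    intro q
    obtain ⟨x, rfl⟩ := QuotientGroup.mk'_surjective N q
    have hx : x ∈ (↑(K ⊔ N) : Set G) := by rw [hsup]; trivial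
    rw [Subgroup.mul_normal] at hx
    obtain ⟨k, hk, n, hn, rfl⟩ := hx
    refine ⟨⟨k, hk⟩, ?_⟩
    show ((k : G) : G ⧸ N) = ((k * n : G) : G ⧸ N)
    exact QuotientGroup.eq.mpr (by simpa using hn)
  let eqv : K ≃* G ⧸ N := MulEquiv.ofBijective ρ ⟨hinj, hsurj⟩
  refine ⟨K.subtype.comp (eqv.symm.toMonoidHom.comp π), ⟨?_, ?_⟩, ?_⟩
  · intro x
    have : ρ (eqv.symm (π x)) = π x := eqv.apply_symm_apply (π x)
    have h1 : ((eqv.symm (π x) : G) : G ⧸ N) = (x : G ⧸ N) := this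
    have := QuotientGroup.eq.mp h1.symm
    simpa using this
  · intro n hn
    have h1 : π n = 1 := (QuotientGroup.eq_one_iff n).mpr hn
    simp [h1]
  · intro k hk
    have h1 : π k = ρ ⟨k, hk⟩ := rfl
    have : eqv.symm (π k) = ⟨k, hk⟩ := by
      rw [h1]
      exact eqv.symm_apply_apply ⟨k, hk⟩
    simp [this]

theorem sec_triple {N : Subgroup G} (hN : N.Normal)
    (hab : ∀ a ∈ N, ∀ b ∈ N, a * b = b * a)
    {s t r : G →* G} (hs : IsSec N s) (ht : IsSec N t) (hr : IsSec N r) :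
    ∃ F : G →* G, IsSec N F ∧ ∀ x, F x = s x * (t x)⁻¹ * r x := by
  have hhom : ∀ a b : G, s (a * b) * (t (a * b))⁻¹ * r (a * b) =
      (s a * (t a)⁻¹ * r a) * (s b * (t b)⁻¹ * r b) := by
    intro a b
    have hu : (t a)⁻¹ * r a ∈ N := by
      have h1 : (t a)⁻¹ * a ∈ N := by
        simpa using N.inv_mem (ht.1 a)
      have h2 : a⁻¹ * r a ∈ N := hr.1 a
      have : ((t a)⁻¹ * a) * (a⁻¹ * r a) ∈ N := N.mul_mem h1 h2
      simpa [mul_assoc] using this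
    have hv : s b * (t b)⁻¹ ∈ N := by
      have h1 : s b * b⁻¹ ∈ N := by
        have := hN.conj_mem _ (hs.1 b) b
        simpa [mul_assoc] using this
      have h2 : b * (t b)⁻¹ ∈ N := by
        have := hN.conj_mem _ (N.inv_mem (ht.1 b)) b
        simpa [mul_assoc] using this
      have : (s b * b⁻¹) * (b * (t b)⁻¹) ∈ N := N.mul_mem h1 h2
      simpa [mul_assoc] using this
    have key : ((t a)⁻¹ * r a) * (s b * (t b)⁻¹) = (s b * (t b)⁻¹) * ((t a)⁻¹ * r a) :=
      hab _ hu _ hv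
    calc s (a * b) * (t (a * b))⁻¹ * r (a * b)
        = s a * ((s b * (t b)⁻¹) * ((t a)⁻¹ * r a)) * r b := by
          rw [map_mul, map_mul, map_mul, mul_inv_rev]; group
      _ = s a * (((t a)⁻¹ * r a) * (s b * (t b)⁻¹)) * r b := by rw [key]
      _ = (s a * (t a)⁻¹ * r a) * (s b * (t b)⁻¹ * r b) := by group
  refine ⟨MonoidHom.mk' (fun x => s x * (t x)⁻¹ * r x) hhom, ⟨?_, ?_⟩, fun _ => rfl⟩
  · intro x
    have : x⁻¹ * (s x * (t x)⁻¹ * r x) =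
        (x⁻¹ * s x) * (x⁻¹ * t x)⁻¹ * (x⁻¹ * r x) := by group
    show x⁻¹ * (s x * (t x)⁻¹ * r x) ∈ N
    rw [this]
    exact N.mul_mem (N.mul_mem (hs.1 x) (N.inv_mem (ht.1 x))) (hr.1 x)
  · intro n hn
    show s n * (t n)⁻¹ * r n = 1
    rw [hs.2 n hn, ht.2 n hn, hr.2 n hn]
    simp

end AbMinAux

/-- Let `G` be a finite group and let `N = ⟨e 1, …, e l⟩` be an abelian minimal normal
subgroup of `G`. If `G = ⟨g 1, …, g d⟩N` then either (1) `d(G) ≤ d` and either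
`G = ⟨g 1, …, g d⟩` or `G = ⟨g 1, …, g (i-1), g i * e j, g (i+1), …, g d⟩` for some `i, j`;
or (2) `d(G) = d + 1` and `G = ⟨g 1, …, g d, x⟩` for every `1 ≠ x ∈ N`. -/
theorem abelian_minimal_normal_generation
    {G : Type*} [Group G] [Finite G]
    (N : Subgroup G) (hNnormal : N.Normal) (hNne : N ≠ ⊥)
    (hNmin : ∀ M : Subgroup G, M.Normal → M ≤ N → M = ⊥ ∨ M = N)
    (habelian : ∀ a ∈ N, ∀ b ∈ N, a * b = b * a)
    (l : ℕ) (e : Fin l → G) (he : Subgroup.closure (Set.range e) = N)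
    (d : ℕ) (g : Fin d → G)
    (hgen : Subgroup.closure (Set.range g) ⊔ N = ⊤) :
    (Group.rank G ≤ d ∧
      (Subgroup.closure (Set.range g) = ⊤ ∨
        ∃ i : Fin d, ∃ j : Fin l,
          Subgroup.closure (Set.range (Function.update g i (g i * e j))) = ⊤)) ∨
    (Group.rank G = d + 1 ∧
      ∀ x ∈ N, x ≠ 1 → Subgroup.closure (Set.range g ∪ {x}) = ⊤) := by
  classical
  haveI : Group.FG G := Group.fg_of_finite
  set H := Subgroup.closure (Set.range g) with hH
  have rank_le_of_fun : ∀ f : Fin d → G, Subgroup.closure (Set.range f) = ⊤ →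
      Group.rank G ≤ d := by
    intro f hf
    have hcl : Subgroup.closure ((Finset.univ.image f : Finset G) : Set G) = ⊤ := by
      rw [Finset.coe_image, Finset.coe_univ, Set.image_univ]; exact hf
    calc Group.rank G ≤ (Finset.univ.image f).card := Group.rank_le hcl
      _ ≤ (Finset.univ : Finset (Fin d)).card := Finset.card_image_le
      _ = d := by simp
  have key : ∀ M : Subgroup G, M ⊔ N = ⊤ → M ≠ ⊤ → M ⊓ N = ⊥ := by
    intro M hsup hne
    rcases hNmin (M ⊓ N) (AbMinAux.normal_inf N M hNnormal habelian hsup) inf_le_right with h | h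
    · exact h
    · exfalso
      apply hne
      have hNle : N ≤ M := h ▸ inf_le_left
      rw [← hsup, sup_eq_left.mpr hNle]
  by_cases hHtop : H = ⊤
  · exact Or.inl ⟨rank_le_of_fun g hHtop, Or.inl hHtop⟩
  by_cases hrep : ∃ i : Fin d, ∃ j : Fin l,
      Subgroup.closure (Set.range (Function.update g i (g i * e j))) = ⊤
  · obtain ⟨i, j, hij⟩ := hrep
    exact Or.inl ⟨rank_le_of_fun _ hij, Or.inr ⟨i, j, hij⟩⟩
  push_neg at hrep
  right
  have parta : ∀ x ∈ N, x ≠ 1 → Subgroup.closure (Set.range g ∪ {x}) = ⊤ := by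
    intro x hx hx1
    set M := Subgroup.closure (Set.range g ∪ {x}) with hM
    have hHM : H ≤ M := Subgroup.closure_mono Set.subset_union_left
    have hMsup : M ⊔ N = ⊤ := by
      rw [eq_top_iff, ← hgen]
      exact sup_le_sup_right hHM N
    by_contra hMne
    have hinf := key M hMsup hMne
    have hxM : x ∈ M := Subgroup.subset_closure (Or.inr rfl)
    have : x ∈ M ⊓ N := ⟨hxM, hx⟩
    rw [hinf, Subgroup.mem_bot] at this
    exact hx1 this
  obtain ⟨x0, hx0N, hx0ne⟩ : ∃ x ∈ N, x ≠ 1 := by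
    by_contra hc
    push_neg at hc
    exact hNne ((Subgroup.eq_bot_iff_forall N).mpr hc)
  have hrank_le : Group.rank G ≤ d + 1 := by
    have hcl : Subgroup.closure ((insert x0 (Finset.univ.image g) : Finset G) : Set G) = ⊤ := by
      rw [Finset.coe_insert, Finset.coe_image, Finset.coe_univ, Set.image_univ]
      rw [Set.insert_eq, Set.union_comm]
      exact parta x0 hx0N hx0ne
    calc Group.rank G ≤ (insert x0 (Finset.univ.image g)).card := Group.rank_le hcl
      _ ≤ (Finset.univ.image g).card + 1 := Finset.card_insert_le _ _
      _ ≤ d + 1 := by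
          have h1 : (Finset.univ.image g).card ≤ d := by
            calc (Finset.univ.image g).card ≤ (Finset.univ : Finset (Fin d)).card :=
                  Finset.card_image_le
              _ = d := by simp
          omega
  have hHinf : H ⊓ N = ⊥ := key H hgen hHtop
  obtain ⟨s0, hs0sec, hs0fix⟩ := AbMinAux.sec_exists N hNnormal H hgen hHinf
  have hs0g : ∀ i, s0 (g i) = g i := fun i =>
    hs0fix (g i) (Subgroup.subset_closure ⟨i, rfl⟩)
  set SV : (Fin d → G) → Prop :=
    fun ν => ∃ s : G →* G, AbMinAux.IsSec N s ∧ ∀ i, (g i)⁻¹ * s (g i) = ν i with hSV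
  have SV1 : SV 1 := ⟨s0, hs0sec, fun i => by simp [hs0g i]⟩
  have SVmul : ∀ ν μ, SV ν → SV μ → SV (ν * μ) := by
    rintro ν μ ⟨s, hs, hνs⟩ ⟨t, ht, hμt⟩
    obtain ⟨F, hF, hFval⟩ := AbMinAux.sec_triple hNnormal habelian hs hs0sec ht
    refine ⟨F, hF, fun i => ?_⟩
    rw [hFval, hs0g i, Pi.mul_apply, ← hνs i, ← hμt i]
    group
  have SVinv : ∀ ν, SV ν → SV ν⁻¹ := by
    rintro ν ⟨s, hs, hνs⟩
    obtain ⟨F, hF, hFval⟩ := AbMinAux.sec_triple hNnormal habelian hs0sec hs hs0sec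
    refine ⟨F, hF, fun i => ?_⟩
    rw [hFval, hs0g i, Pi.inv_apply, ← hνs i]
    group
  have SVsingle_e : ∀ (i : Fin d) (j : Fin l), SV (Pi.mulSingle i (e j)) := by
    intro i j
    set K := Subgroup.closure (Set.range (Function.update g i (g i * e j))) with hK
    have hejN : e j ∈ N := he ▸ Subgroup.subset_closure ⟨j, rfl⟩
    have hKsup : K ⊔ N = ⊤ := by
      rw [eq_top_iff, ← hgen]
      refine sup_le ?_ le_sup_right
      rw [Subgroup.closure_le]
      rintro y ⟨k, rfl⟩
      by_cases hk : k = i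
      · subst hk
        have h1 : g k * e j ∈ K :=
          Subgroup.subset_closure ⟨k, by rw [Function.update_self]⟩
        have h2 : g k = (g k * e j) * (e j)⁻¹ := by group
        rw [SetLike.mem_coe, h2]
        exact Subgroup.mul_mem _ (Subgroup.mem_sup_left h1)
          (Subgroup.mem_sup_right (N.inv_mem hejN))
      · have : g k ∈ K := Subgroup.subset_closure ⟨k, by rw [Function.update_of_ne hk]⟩
        exact Subgroup.mem_sup_left this
    have hKinf : K ⊓ N = ⊥ := key K hKsup (hrep i j)
    obtain ⟨s, hssec, hsfix⟩ := AbMinAux.sec_exists N hNnormal K hKsup hKinf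
    refine ⟨s, hssec, fun k => ?_⟩
    by_cases hk : k = i
    · subst hk
      have h1 : s (g k * e j) = g k * e j :=
        hsfix _ (Subgroup.subset_closure ⟨k, by rw [Function.update_self]⟩)
      have h2 : s (g k) = g k * e j := by
        have h3 : g k = (g k * e j) * (e j)⁻¹ := by group
        rw [h3, map_mul, map_inv, h1, hssec.2 (e j) hejN]
        simp
      rw [h2, Pi.mulSingle_eq_same]
      group
    · have h1 : s (g k) = g k :=
        hsfix _ (Subgroup.subset_closure ⟨k, by rw [Function.update_of_ne hk]⟩)
      rw [h1, Pi.mulSingle_eq_of_ne hk]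
      simp
  have SVsingle : ∀ (i : Fin d), ∀ n ∈ N, SV (Pi.mulSingle i n) := by
    intro i n hn
    rw [← he] at hn
    induction hn using Subgroup.closure_induction with
    | mem y hy => obtain ⟨j, rfl⟩ := hy; exact SVsingle_e i j
    | one => rw [Pi.mulSingle_one]; exact SV1
    | mul a b _ _ ha hb => rw [Pi.mulSingle_mul]; exact SVmul _ _ ha hb
    | inv a _ ha => rw [Pi.mulSingle_inv]; exact SVinv _ ha
  have SVall : ∀ ν : Fin d → G, (∀ i, ν i ∈ N) → SV ν := by
    have main : ∀ S : Finset (Fin d), ∀ ν : Fin d → G, (∀ i, ν i ∈ N) →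
        (∀ i ∉ S, ν i = 1) → SV ν := by
      intro S
      induction S using Finset.induction_on with
      | empty =>
        intro ν _ hsupp
        have : ν = 1 := funext fun i => hsupp i (Finset.notMem_empty i)
        rw [this]; exact SV1
      | @insert a S ha IH =>
        intro ν hν hsupp
        have hdecomp : ν = Pi.mulSingle a (ν a) * Function.update ν a 1 := by
          funext k
          by_cases hk : k = a
          · subst hk; simp
          · simp [Pi.mulSingle_eq_of_ne hk, Function.update_of_ne hk]
        rw [hdecomp]
        refine SVmul _ _ (SVsingle a (ν a) (hν a)) (IH _ ?_ ?_)
        · intro i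
          by_cases hi : i = a
          · subst hi; rw [Function.update_self]; exact N.one_mem
          · rw [Function.update_of_ne hi]; exact hν i
        · intro i hi
          by_cases hia : i = a
          · subst hia; rw [Function.update_self]
          · rw [Function.update_of_ne hia]
            exact hsupp i (fun h => (Finset.mem_insert.mp h).elim hia hi)
    intro ν hν
    exact main Finset.univ ν hν (fun i hi => absurd (Finset.mem_univ i) hi)
  haveI : Finite (G →* G) := Finite.of_injective _ DFunLike.coe_injective
  have injPhi : ∀ y : Fin d → G, Subgroup.closure (Set.range y) ⊔ N = ⊤ →
      Function.Injective (fun (s : {s : G →* G // AbMinAux.IsSec N s}) (i : Fin d) =>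
        (⟨(y i)⁻¹ * s.1 (y i), s.2.1 (y i)⟩ : N)) := by
    intro y hy s t hst
    have heq : ∀ i, s.1 (y i) = t.1 (y i) := by
      intro i
      have h1 := congrFun hst i
      have h2 : (y i)⁻¹ * s.1 (y i) = (y i)⁻¹ * t.1 (y i) := congrArg Subtype.val h1
      exact mul_left_cancel h2
    have heqN : Set.EqOn s.1 t.1 (Set.range y ∪ ↑N) := by
      rintro z (⟨i, rfl⟩ | hz)
      · exact heq i
      · rw [s.2.2 z hz, t.2.2 z hz]
    have hcl : Subgroup.closure (Set.range y ∪ ↑N) = ⊤ := by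
      rw [Subgroup.closure_union, Subgroup.closure_eq, hy]
    have hall := MonoidHom.eqOn_closure heqN
    rw [hcl] at hall
    exact Subtype.ext (DFunLike.ext _ _ fun z => hall (Subgroup.mem_top z))
  have surjPhi : Function.Surjective (fun (s : {s : G →* G // AbMinAux.IsSec N s}) (i : Fin d) =>
      (⟨(g i)⁻¹ * s.1 (g i), s.2.1 (g i)⟩ : N)) := by
    intro ν
    obtain ⟨s, hs, hval⟩ := SVall (fun i => (ν i : G)) (fun i => (ν i).2)
    exact ⟨⟨s, hs⟩, funext fun i => Subtype.ext (hval i)⟩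
  have hcard : Nat.card {s : G →* G // AbMinAux.IsSec N s} = Nat.card (Fin d → N) :=
    Nat.card_eq_of_bijective _ ⟨injPhi g hgen, surjPhi⟩
  have hrank_ge : d + 1 ≤ Group.rank G := by
    by_contra hlt
    push_neg at hlt
    have hrd : Group.rank G ≤ d := by omega
    obtain ⟨S, hScard, hSgen⟩ := Group.rank_spec G
    set L := S.toList with hL
    have hLlen : L.length ≤ d := by rw [hL, Finset.length_toList, hScard]; exact hrd
    set y : Fin d → G := fun i => L.getD i 1 with hy
    have hSsub : (S : Set G) ⊆ Set.range y := by
      intro z hz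
      have hzL : z ∈ L := (Finset.mem_toList).mpr hz
      obtain ⟨k, hk, hkz⟩ := List.getElem_of_mem hzL
      refine ⟨⟨k, lt_of_lt_of_le hk hLlen⟩, ?_⟩
      show L.getD k 1 = z
      rw [List.getD_eq_getElem L 1 hk]
      exact hkz
    have hygen : Subgroup.closure (Set.range y) = ⊤ :=
      top_unique (hSgen ▸ Subgroup.closure_mono hSsub)
    have hysup : Subgroup.closure (Set.range y) ⊔ N = ⊤ := by
      rw [hygen, top_sup_eq]
    have hbij : Function.Bijective (fun (s : {s : G →* G // AbMinAux.IsSec N s}) (i : Fin d) =>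
        (⟨(y i)⁻¹ * s.1 (y i), s.2.1 (y i)⟩ : N)) := by
      rw [Nat.bijective_iff_injective_and_card]
      exact ⟨injPhi y hysup, hcard⟩
    obtain ⟨s, hs⟩ := hbij.2 (fun _ => 1)
    have hfix : ∀ i, s.1 (y i) = y i := by
      intro i
      have h1 := congrFun hs i
      have h2 : (y i)⁻¹ * s.1 (y i) = 1 := congrArg Subtype.val h1
      exact (inv_mul_eq_one.mp h2).symm
    have hrange : s.1.range = ⊤ := by
      rw [eq_top_iff, ← hygen, Subgroup.closure_le]
      rintro z ⟨i, rfl⟩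
      exact ⟨y i, hfix i⟩
    have hsurj : Function.Surjective s.1 := MonoidHom.range_eq_top.mp hrange
    have hinj : Function.Injective s.1 := Finite.injective_iff_surjective.mpr hsurj
    have hx01 : x0 = 1 := by
      have h1 : s.1 x0 = 1 := s.2.2 x0 hx0N
      have h2 : s.1 (1 : G) = 1 := map_one _
      exact hinj (h1.trans h2.symm)
    exact hx0ne hx01
  exact ⟨le_antisymm hrank_le hrank_ge, parta⟩
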